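/- (Willems' fundamental lemma.) Let n, n_u, n_y, L, D ∈ ℕ with n_u ≥ 1, D ≥ 1 and L ≥ D + n. Consider the linear time-invariant system x(k+1) = A x(k) + B u(k), y(k) = C x(k) + D₀ u(k) with A ∈ ℝ^{n×n}, B ∈ ℝ^{n×n_u}, C ∈ ℝ^{n_y×n}, D₀ ∈ ℝ^{n_y×n_u}, and assume the pair (A,B) is controllable, i.e., the controllability matrix [B, AB, …, A^{n−1}B] has rank n. Let û(0),…,û(L−1) ∈ ℝ^{n_u} and ŷ(0),…,ŷ(L−1) ∈ ℝ^{n_y} be such that there exists a state sequence x̂(0),…,x̂(L) with x̂(k+1) = A x̂(k) + B û(k) and ŷ(k) = C x̂(k) + D₀ û(k) for all k = 0,…,L−1, and suppose û is persistently exciting of order D + n, i.e., the Hankel matrix H_{D+n}(û) ∈ ℝ^{n_u(D+n) × (L−D−n+1)} has full row rank. Then a pair of sequences ũ(0),…,ũ(D−1) ∈ ℝ^{n_u}, ỹ(0),…,ỹ(D−1) ∈ ℝ^{n_y} is a trajectory of the system (i.e., there exists x̃(0),…,x̃(D) with x̃(k+1) = A x̃(k) + B ũ(k) and ỹ(k)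 = C x̃(k) + D₀ ũ(k) for k = 0,…,D−1) if and only if there exists g ∈ ℝ^{L−D+1} such that H_D(û) g = col(ũ(0),…,ũ(D−1)) and H_D(ŷ) g = col(ỹ(0),…,ỹ(D−1)). -/

import Mathlib

/-- The Hankel matrix of depth `D` of a vector-valued sequence `z(0), …, z(L-1)`,
with block-row index `i : Fin D`, within-block index `r : Fin nz`, and column
index `j : Fin (L - D + 1)`; its `((i, r), j)` entry is the `r`-th component
of `z (i + j)`. -/
def hankelMatrix (nz D L : ℕ) (z : ℕ → Fin nz → ℝ) :
    Matrix (Fin D × Fin nz) (Fin (L - D + 1)) ℝ :=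
  fun p j => z (p.1.1 + j.1) p.2

/-- `(u, y)` (given as `ℕ`-indexed sequences) is a length-`T` input/output trajectory
of the LTI system `x⁺ = A x + B u`, `y = C x + D₀ u`. -/
def IsTrajectory {n nu ny : ℕ}
    (A : Matrix (Fin n) (Fin n) ℝ) (B : Matrix (Fin n) (Fin nu) ℝ)
    (C : Matrix (Fin ny) (Fin n) ℝ) (D₀ : Matrix (Fin ny) (Fin nu) ℝ)
    (T : ℕ) (u : ℕ → Fin nu → ℝ) (y : ℕ → Fin ny → ℝ) : Prop :=
  ∃ x : ℕ → Fin n → ℝ, ∀ k < T,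
    x (k + 1) = A.mulVec (x k) + B.mulVec (u k) ∧
    y k = C.mulVec (x k) + D₀.mulVec (u k)

/-- The pair `(A, B)` is controllable: the controllability matrix
`[B, AB, …, A^{n−1}B]` has rank `n`. -/
def IsControllable {n nu : ℕ}
    (A : Matrix (Fin n) (Fin n) ℝ) (B : Matrix (Fin n) (Fin nu) ℝ) : Prop :=
  (Matrix.of fun (r : Fin n) (p : Fin n × Fin nu) =>
    (A ^ (p.1 : ℕ) * B) r p.2).rank = n

open Matrix Finset

lemma mulVec_surj_of_rows_indep {α β : Type*} [Fintype α] [Fintype β] (M : Matrix α β ℝ)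
    (h : ∀ w : α → ℝ, w ᵥ* M = 0 → w = 0) : Function.Surjective M.mulVec := by
  have hker : LinearMap.ker (Mᵀ).mulVecLin = ⊥ := by
    rw [LinearMap.ker_eq_bot']
    intro w hw
    exact h w (by rw [← Matrix.mulVec_transpose]; exact hw)
  have h2 := LinearMap.finrank_range_add_finrank_ker (Mᵀ).mulVecLin
  rw [Module.finrank_pi, hker, finrank_bot, add_zero] at h2
  have hrank : M.rank = Fintype.card α := by
    rw [← Matrix.rank_transpose]; exact h2
  have hrange : LinearMap.range M.mulVecLin = ⊤ := by
    apply Submodule.eq_top_of_finrank_eq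
    rw [Module.finrank_pi]
    exact hrank
  intro v
  have hv : v ∈ LinearMap.range M.mulVecLin := by rw [hrange]; trivial
  obtain ⟨g, hg⟩ := hv
  exact ⟨g, hg⟩

lemma mulVec_sum_smul {p q : ℕ} (M : Matrix (Fin p) (Fin q) ℝ) {ι : Type*} (s : Finset ι)
    (g : ι → ℝ) (v : ι → Fin q → ℝ) :
    M *ᵥ (∑ j ∈ s, g j • v j) = ∑ j ∈ s, g j • (M *ᵥ v j) := by
  have h := map_sum M.mulVecLin (fun j => g j • v j) s
  simp only [Matrix.mulVecLin_apply] at h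
  rw [h]
  congr 1; funext j
  rw [Matrix.mulVec_smul]

lemma rows_indep_of_rank_eq {α β : Type*} [Fintype α] [Fintype β]
    (M : Matrix α β ℝ) (h : M.rank = Fintype.card α)
    {w : α → ℝ} (hw : w ᵥ* M = 0) : w = 0 := by
  have h1 : (Mᵀ).rank = Fintype.card α := by rw [Matrix.rank_transpose]; exact h
  have h2 := LinearMap.finrank_range_add_finrank_ker (Mᵀ).mulVecLin
  rw [Module.finrank_pi] at h2
  have hker : Module.finrank ℝ (LinearMap.ker (Mᵀ).mulVecLin) = 0 := by
    have : Matrix.rank Mᵀ = Module.finrank ℝ (LinearMap.range (Mᵀ).mulVecLin) := rfl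
    omega
  have hbot : LinearMap.ker (Mᵀ).mulVecLin = ⊥ := Submodule.finrank_eq_zero.mp hker
  have hmem : w ∈ LinearMap.ker (Mᵀ).mulVecLin := by
    simp [LinearMap.mem_ker, Matrix.mulVecLin_apply, Matrix.mulVec_transpose, hw]
  rw [hbot] at hmem
  simpa using hmem

lemma dotProduct_finset_sum {q : ℕ} {ι : Type*} (s : Finset ι) (v : Fin q → ℝ)
    (f : ι → Fin q → ℝ) : v ⬝ᵥ (∑ t ∈ s, f t) = ∑ t ∈ s, v ⬝ᵥ f t := by
  simp only [dotProduct, Finset.sum_apply, Finset.mul_sum]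
  exact Finset.sum_comm

lemma finset_sum_mulVec {p q : ℕ} {ι : Type*} (s : Finset ι)
    (M : ι → Matrix (Fin p) (Fin q) ℝ) (v : Fin q → ℝ) :
    (∑ i ∈ s, M i) *ᵥ v = ∑ i ∈ s, (M i) *ᵥ v := by
  induction s using Finset.cons_induction with
  | empty => simp
  | cons a s ha ih => simp [Finset.sum_cons, Matrix.add_mulVec, ih]

lemma state_formula {n nu : ℕ} (A : Matrix (Fin n) (Fin n) ℝ) (B : Matrix (Fin n) (Fin nu) ℝ)
    (x : ℕ → Fin n → ℝ) (u : ℕ → Fin nu → ℝ) (L : ℕ)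
    (hx : ∀ k < L, x (k + 1) = A *ᵥ x k + B *ᵥ u k) :
    ∀ i j, j + i ≤ L →
      x (j + i) = (A ^ i) *ᵥ x j
        + ∑ t ∈ Finset.range i, (A ^ (i - 1 - t) * B) *ᵥ u (j + t) := by
  intro i
  induction i with
  | zero => intro j _; simp
  | succ i ih =>
    intro j hj
    have h1 : j + i < L := by omega
    have h2 : x (j + i + 1) = A *ᵥ x (j + i) + B *ᵥ u (j + i) := hx _ h1
    have h3 := ih j (by omega)
    rw [show j + (i+1) = j + i + 1 by omega, h2, h3, Matrix.mulVec_add,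
      Finset.sum_range_succ]
    rw [Matrix.mulVec_mulVec, ← pow_succ']
    have h4 : A *ᵥ ∑ t ∈ Finset.range i, (A ^ (i - 1 - t) * B) *ᵥ u (j + t)
        = ∑ t ∈ Finset.range i, (A ^ (i + 1 - 1 - t) * B) *ᵥ u (j + t) := by
      have := map_sum A.mulVecLin (fun t => (A ^ (i - 1 - t) * B) *ᵥ u (j + t)) (Finset.range i)
      simp only [Matrix.mulVecLin_apply] at this
      rw [this]
      apply Finset.sum_congr rfl
      intro t ht
      rw [Finset.mem_range] at ht
      rw [Matrix.mulVec_mulVec, ← Matrix.mul_assoc, ← pow_succ']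
      have he : i - 1 - t + 1 = i + 1 - 1 - t := by omega
      rw [he]
    rw [h4]
    have h5 : i + 1 - 1 - i = 0 := by omega
    rw [h5, pow_zero, Matrix.one_mul]
    abel


lemma triple_swap {nu : ℕ} (P N : ℕ) (a : ℕ → ℝ) (F : ℕ → ℕ → Fin nu → ℝ)
    (v : ℕ → Fin nu → ℝ) :
    ∑ m : Fin P, ∑ r : Fin nu, (∑ i ∈ Finset.range N, a i * F i m.1 r) * v m.1 r
      = ∑ i ∈ Finset.range N, a i * ∑ m ∈ Finset.range P, F i m ⬝ᵥ v m := by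
  rw [Fin.sum_univ_eq_sum_range (fun m =>
    ∑ r : Fin nu, (∑ i ∈ Finset.range N, a i * F i m r) * v m r) P]
  simp only [dotProduct, Finset.mul_sum, Finset.sum_mul]
  calc ∑ m ∈ Finset.range P, ∑ r : Fin nu, ∑ i ∈ Finset.range N, a i * F i m r * v m r
      = ∑ m ∈ Finset.range P, ∑ i ∈ Finset.range N, ∑ r : Fin nu, a i * F i m r * v m r := by
        exact Finset.sum_congr rfl fun m _ => Finset.sum_comm
    _ = ∑ i ∈ Finset.range N, ∑ m ∈ Finset.range P, ∑ r : Fin nu, a i * F i m r * v m r :=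
        Finset.sum_comm
    _ = ∑ i ∈ Finset.range N, ∑ m ∈ Finset.range P, ∑ r : Fin nu, a i * (F i m r * v m r) := by
        simp only [mul_assoc]

lemma key_rank {n nu L D : ℕ} (hD : 1 ≤ D) (hL : D + n ≤ L)
    (A : Matrix (Fin n) (Fin n) ℝ) (B : Matrix (Fin n) (Fin nu) ℝ)
    (hctrb : IsControllable A B)
    (x : ℕ → Fin n → ℝ) (u : ℕ → Fin nu → ℝ)
    (hx : ∀ k < L, x (k + 1) = A *ᵥ x k + B *ᵥ u k)
    (hpe : (hankelMatrix nu (D + n) L u).rank = nu * (D + n))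
    (ξ : Fin n → ℝ) (η : ℕ → Fin nu → ℝ)
    (hw : ∀ j ≤ L - D, ξ ⬝ᵥ x j + ∑ k ∈ Finset.range D, η k ⬝ᵥ u (k + j) = 0) :
    ξ = 0 ∧ ∀ k < D, η k = 0 := by
  set c : ℕ → ℝ := fun i => A.charpoly.coeff i with hc
  have hdeg : A.charpoly.natDegree = n := by
    rw [Matrix.charpoly_natDegree_eq_dim, Fintype.card_fin]
  have hcn : c n = 1 := by
    have h1 := A.charpoly_monic.coeff_natDegree
    rwa [hdeg] at h1
  have hCH : ∑ i ∈ Finset.range (n + 1), c i • A ^ i = 0 := by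
    have h := Matrix.aeval_self_charpoly A
    rw [Polynomial.aeval_eq_sum_range, hdeg] at h
    exact h
  set φ : ℕ → ℕ → Fin nu → ℝ := fun i m =>
    if m < i then ξ ᵥ* (A ^ (i - 1 - m) * B)
    else if m < i + D then η (m - i) else 0 with hφ
  -- Step A
  have Hi : ∀ i ≤ n, ∀ j, j ≤ L - D - n →
      (ξ ᵥ* A ^ i) ⬝ᵥ x j + ∑ m ∈ Finset.range (D + n), φ i m ⬝ᵥ u (m + j) = 0 := by
    intro i hi j hj
    have hsplit : ∑ m ∈ Finset.range (D + n), φ i m ⬝ᵥ u (m + j)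
        = ∑ t ∈ Finset.range i, (ξ ᵥ* (A ^ (i - 1 - t) * B)) ⬝ᵥ u (t + j)
          + ∑ k ∈ Finset.range D, η k ⬝ᵥ u (i + k + j) := by
      rw [Finset.range_eq_Ico,
        ← Finset.sum_Ico_consecutive (fun m => φ i m ⬝ᵥ u (m + j)) (Nat.zero_le i)
          (by omega : i ≤ D + n),
        ← Finset.sum_Ico_consecutive (fun m => φ i m ⬝ᵥ u (m + j))
          (by omega : i ≤ i + D) (by omega : i + D ≤ D + n)]
      have e1 : ∑ m ∈ Finset.Ico 0 i, φ i m ⬝ᵥ u (m + j)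
          = ∑ t ∈ Finset.range i, (ξ ᵥ* (A ^ (i - 1 - t) * B)) ⬝ᵥ u (t + j) := by
        rw [← Finset.range_eq_Ico]
        apply Finset.sum_congr rfl
        intro t ht
        rw [Finset.mem_range] at ht
        simp only [hφ]
        rw [if_pos ht]
      have e2 : ∑ m ∈ Finset.Ico i (i + D), φ i m ⬝ᵥ u (m + j)
          = ∑ k ∈ Finset.range D, η k ⬝ᵥ u (i + k + j) := by
        rw [Finset.sum_Ico_eq_sum_range]
        simp only [Nat.add_sub_cancel_left]
        apply Finset.sum_congr rfl
        intro k hk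
        rw [Finset.mem_range] at hk
        simp only [hφ]
        rw [if_neg (by omega), if_pos (by omega)]
        have : i + k - i = k := by omega
        rw [this]
      have e3 : ∑ m ∈ Finset.Ico (i + D) (D + n), φ i m ⬝ᵥ u (m + j) = 0 := by
        apply Finset.sum_eq_zero
        intro m hm
        rw [Finset.mem_Ico] at hm
        simp only [hφ]
        rw [if_neg (by omega), if_neg (by omega)]
        exact zero_dotProduct _
      rw [e1, e2, e3, add_zero]
    rw [hsplit]
    have hji : j + i ≤ L := by omega
    have hxf := state_formula A B x u L hx i j hji
    have hwji := hw (j + i) (by omega)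
    rw [hxf] at hwji
    rw [dotProduct_add, dotProduct_finset_sum] at hwji
    rw [Matrix.dotProduct_mulVec] at hwji
    have e4 : ∑ t ∈ Finset.range i, ξ ⬝ᵥ ((A ^ (i - 1 - t) * B) *ᵥ u (j + t))
        = ∑ t ∈ Finset.range i, (ξ ᵥ* (A ^ (i - 1 - t) * B)) ⬝ᵥ u (t + j) := by
      apply Finset.sum_congr rfl
      intro t ht
      rw [Matrix.dotProduct_mulVec, show j + t = t + j by omega]
    have e5 : ∑ k ∈ Finset.range D, η k ⬝ᵥ u (k + (j + i))
        = ∑ k ∈ Finset.range D, η k ⬝ᵥ u (i + k + j) := by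
      apply Finset.sum_congr rfl
      intro k _
      rw [show k + (j + i) = i + k + j by omega]
    rw [e4, e5] at hwji
    linarith [hwji]
  -- Step C
  have hψH : (fun p : Fin (D + n) × Fin nu =>
      ∑ i ∈ Finset.range (n + 1), c i * φ i p.1.1 p.2) ᵥ* hankelMatrix nu (D + n) L u = 0 := by
    funext j
    have hj : (j : ℕ) ≤ L - D - n := by
      have := j.isLt
      omega
    show _ = (0 : ℝ)
    have e0 : ((fun p : Fin (D + n) × Fin nu =>
          ∑ i ∈ Finset.range (n + 1), c i * φ i p.1.1 p.2) ᵥ* hankelMatrix nu (D + n) L u) j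
        = ∑ i ∈ Finset.range (n + 1),
            c i * ∑ m ∈ Finset.range (D + n), φ i m ⬝ᵥ u (m + j.1) := by
      have := triple_swap (D + n) (n + 1) c (fun i m r => φ i m r)
        (fun m => u (m + j.1))
      simp only [Matrix.vecMul, dotProduct, hankelMatrix, Fintype.sum_prod_type]
      exact this
    rw [e0]
    have e1 : ∀ i ∈ Finset.range (n + 1),
        c i * ∑ m ∈ Finset.range (D + n), φ i m ⬝ᵥ u (m + j.1)
          = -(c i * (ξ ⬝ᵥ (A ^ i *ᵥ x j.1))) := by
      intro i hi
      rw [Finset.mem_range] at hi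
      have h := Hi i (by omega) j.1 hj
      have h2 : ∑ m ∈ Finset.range (D + n), φ i m ⬝ᵥ u (m + j.1)
          = -((ξ ᵥ* A ^ i) ⬝ᵥ x j.1) := by linarith
      rw [h2, ← Matrix.dotProduct_mulVec]
      ring
    rw [Finset.sum_congr rfl e1]
    have e2 : ∑ i ∈ Finset.range (n + 1), c i * (ξ ⬝ᵥ (A ^ i *ᵥ x j.1))
        = ξ ⬝ᵥ ((∑ i ∈ Finset.range (n + 1), c i • A ^ i) *ᵥ x j.1) := by
      rw [finset_sum_mulVec, dotProduct_finset_sum]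
      apply Finset.sum_congr rfl
      intro i _
      rw [Matrix.smul_mulVec]
      simp [dotProduct_smul, smul_eq_mul]
    rw [Finset.sum_neg_distrib, e2, hCH]
    simp
  have hψ0 : ∀ (m : ℕ), m < D + n → ∀ (r : Fin nu),
      ∑ i ∈ Finset.range (n + 1), c i * φ i m r = 0 := by
    have hcard : (hankelMatrix nu (D + n) L u).rank
        = Fintype.card (Fin (D + n) × Fin nu) := by
      rw [Fintype.card_prod, Fintype.card_fin, Fintype.card_fin, hpe, Nat.mul_comm]
    have h := rows_indep_of_rank_eq (hankelMatrix nu (D + n) L u) hcard hψH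
    intro m hm r
    exact congrFun h (⟨m, hm⟩, r)
  -- Step E: η vanishes
  have hηd : ∀ d k, k < D → D - k ≤ d → η k = 0 := by
    intro d
    induction d with
    | zero => intro k h1 h2; omega
    | succ d ih =>
      intro k h1 h2
      funext r
      have h0 := hψ0 (k + n) (by omega) r
      rw [Finset.sum_range_succ] at h0
      have hz : ∀ i ∈ Finset.range n, c i * φ i (k + n) r = 0 := by
        intro i hi
        rw [Finset.mem_range] at hi
        simp only [hφ]
        rw [if_neg (by omega)]
        by_cases hcase : k + n < i + D
        · rw [if_pos hcase]
          have h3 : η (k + n - i) = 0 := ih (k + n - i) (by omega) (by omega)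
          rw [h3]
          simp
        · rw [if_neg hcase]
          simp
      rw [Finset.sum_eq_zero hz, zero_add] at h0
      have h4 : φ n (k + n) r = η k r := by
        simp only [hφ]
        rw [if_neg (by omega), if_pos (by omega)]
        have h5 : k + n - n = k := by omega
        rw [h5]
      rw [h4, hcn, one_mul] at h0
      simpa using h0
  have hη' : ∀ k, k < D → η k = 0 := fun k hk => hηd D k hk (by omega)
  -- Step F: ξ annihilates the controllability matrix
  have hξB : ∀ q, q < n → ξ ᵥ* (A ^ q * B) = 0 := by
    intro q
    induction q using Nat.strong_induction_on with
    | _ q ih =>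
      intro hq
      funext r
      have h0 := hψ0 (n - 1 - q) (by omega) r
      rw [Finset.sum_range_succ] at h0
      have hz : ∀ i ∈ Finset.range n, c i * φ i (n - 1 - q) r = 0 := by
        intro i hi
        rw [Finset.mem_range] at hi
        simp only [hφ]
        by_cases hcase : n - 1 - q < i
        · rw [if_pos hcase]
          have h3 := ih (i - 1 - (n - 1 - q)) (by omega) (by omega)
          rw [h3]
          simp
        · rw [if_neg hcase]
          by_cases hcase2 : n - 1 - q < i + D
          · rw [if_pos hcase2]
            have h3 : η (n - 1 - q - i) = 0 := hη' _ (by omega)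
            rw [h3]
            simp
          · rw [if_neg hcase2]
            simp
      rw [Finset.sum_eq_zero hz, zero_add, hcn, one_mul] at h0
      have h4 : φ n (n - 1 - q) r = (ξ ᵥ* (A ^ q * B)) r := by
        simp only [hφ]
        rw [if_pos (by omega)]
        have h5 : n - 1 - (n - 1 - q) = q := by omega
        rw [h5]
      rw [h4] at h0
      simpa using h0
  -- Step G: controllability forces ξ = 0
  have hctrb' : (Matrix.of fun (r : Fin n) (p : Fin n × Fin nu) =>
      (A ^ (p.1 : ℕ) * B) r p.2).rank = n := hctrb
  have hξ : ξ = 0 := by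
    apply rows_indep_of_rank_eq (Matrix.of fun (r : Fin n) (p : Fin n × Fin nu) =>
      (A ^ (p.1 : ℕ) * B) r p.2)
    · rw [Fintype.card_fin]
      exact hctrb'
    · funext p
      have h := congrFun (hξB p.1.1 p.1.isLt) p.2
      simpa [Matrix.vecMul, dotProduct, Matrix.of_apply] using h
  exact ⟨hξ, hη'⟩

lemma combo_step {n nu L D : ℕ} (hDL : D ≤ L) (A : Matrix (Fin n) (Fin n) ℝ)
    (B : Matrix (Fin n) (Fin nu) ℝ) (x : ℕ → Fin n → ℝ) (u : ℕ → Fin nu → ℝ)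
    (hx : ∀ k < L, x (k + 1) = A *ᵥ x k + B *ᵥ u k) (g : Fin (L - D + 1) → ℝ)
    (k : ℕ) (hk : k < D) :
    (∑ j : Fin (L - D + 1), g j • x (k + 1 + j.1))
      = A *ᵥ (∑ j : Fin (L - D + 1), g j • x (k + j.1))
        + B *ᵥ (∑ j : Fin (L - D + 1), g j • u (k + j.1)) := by
  rw [mulVec_sum_smul, mulVec_sum_smul, ← Finset.sum_add_distrib]
  apply Finset.sum_congr rfl
  intro jf _
  rw [← smul_add]
  congr 1
  have hkj : k + jf.1 < L := by have := jf.isLt; omega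
  rw [show k + 1 + jf.1 = k + jf.1 + 1 by omega, hx (k + jf.1) hkj]

lemma hankel_mulVec_apply {nz D L : ℕ} (z : ℕ → Fin nz → ℝ) (g : Fin (L - D + 1) → ℝ)
    (k : Fin D) (r : Fin nz) :
    (hankelMatrix nz D L z *ᵥ g) (k, r) = (∑ j : Fin (L - D + 1), g j • z (k.1 + j.1)) r := by
  simp [hankelMatrix, Matrix.mulVec, dotProduct, Finset.sum_apply, mul_comm]


theorem willems_fundamental_lemma
    (n nu ny L D : ℕ) (hnu : 1 ≤ nu) (hD : 1 ≤ D) (hL : D + n ≤ L)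
    (A : Matrix (Fin n) (Fin n) ℝ) (B : Matrix (Fin n) (Fin nu) ℝ)
    (C : Matrix (Fin ny) (Fin n) ℝ) (D₀ : Matrix (Fin ny) (Fin nu) ℝ)
    (hctrb : IsControllable A B)
    (uhat : ℕ → Fin nu → ℝ) (yhat : ℕ → Fin ny → ℝ)
    (htraj : IsTrajectory A B C D₀ L uhat yhat)
    (hpe : (hankelMatrix nu (D + n) L uhat).rank = nu * (D + n))
    (util : ℕ → Fin nu → ℝ) (ytil : ℕ → Fin ny → ℝ) :
    IsTrajectory A B C D₀ D util ytil
    ↔ ∃ g : Fin (L - D + 1) → ℝ,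
        (hankelMatrix nu D L uhat).mulVec g
          = (fun p : Fin D × Fin nu => util p.1.1 p.2) ∧
        (hankelMatrix ny D L yhat).mulVec g
          = (fun p : Fin D × Fin ny => ytil p.1.1 p.2) := by
  obtain ⟨xh, hxh⟩ := htraj
  have hxrec : ∀ k < L, xh (k + 1) = A *ᵥ xh k + B *ᵥ uhat k := fun k hk => (hxh k hk).1
  have hyout : ∀ k < L, yhat k = C *ᵥ xh k + D₀ *ᵥ uhat k := fun k hk => (hxh k hk).2
  constructor
  · -- forward direction
    rintro ⟨xt, hxt⟩
    set M : Matrix (Fin n ⊕ (Fin D × Fin nu)) (Fin (L - D + 1)) ℝ :=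
      Matrix.of fun s j => Sum.elim (fun i => xh j.1 i)
        (fun p => uhat (p.1.1 + j.1) p.2) s with hM
    have hrows : ∀ w : Fin n ⊕ Fin D × Fin nu → ℝ, w ᵥ* M = 0 → w = 0 := by
      intro w hw0
      set ξ : Fin n → ℝ := fun s => w (Sum.inl s) with hξdef
      set η : ℕ → Fin nu → ℝ :=
        fun k => if h : k < D then (fun r => w (Sum.inr (⟨k, h⟩, r))) else 0 with hηdef
      have hhyp : ∀ j ≤ L - D, ξ ⬝ᵥ xh j + ∑ k ∈ Finset.range D, η k ⬝ᵥ uhat (k + j) = 0 := by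
        intro j hj
        have hjlt : j < L - D + 1 := by omega
        have h1 := congrFun hw0 ⟨j, hjlt⟩
        simp only [Matrix.vecMul, dotProduct, hM, Matrix.of_apply,
          Fintype.sum_sum_type, Sum.elim_inl, Sum.elim_inr, Pi.zero_apply] at h1
        have h2 : ∑ k ∈ Finset.range D, η k ⬝ᵥ uhat (k + j)
            = ∑ p : Fin D × Fin nu, w (Sum.inr p) * uhat (p.1.1 + j) p.2 := by
          rw [← Fin.sum_univ_eq_sum_range (fun k => η k ⬝ᵥ uhat (k + j)) D,
            Fintype.sum_prod_type]
          apply Finset.sum_congr rfl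
          intro k _
          simp only [dotProduct]
          apply Finset.sum_congr rfl
          intro r _
          have h3 : η k.1 r = w (Sum.inr (k, r)) := by
            simp only [hηdef]
            rw [dif_pos k.isLt]
          rw [h3]
        rw [h2]
        exact h1
      obtain ⟨hξ0, hη0⟩ := key_rank hD hL A B hctrb xh uhat hxrec hpe ξ η hhyp
      funext s
      cases s with
      | inl i => exact congrFun hξ0 i
      | inr p =>
        have h4 := congrFun (hη0 p.1.1 p.1.isLt) p.2
        simp only [hηdef] at h4
        rw [dif_pos p.1.isLt] at h4
        simpa using h4
    obtain ⟨g, hg⟩ := mulVec_surj_of_rows_indep M hrows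
      (Sum.elim (fun i => xt 0 i) (fun p => util p.1.1 p.2))
    have hx0 : (∑ j : Fin (L - D + 1), g j • xh j.1) = xt 0 := by
      funext i
      have h1 := congrFun hg (Sum.inl i)
      simp only [Matrix.mulVec, dotProduct, hM, Matrix.of_apply, Sum.elim_inl] at h1
      simp only [Finset.sum_apply, Pi.smul_apply, smul_eq_mul]
      rw [← h1]
      apply Finset.sum_congr rfl
      intro jf _
      ring
    have hu : ∀ (k : ℕ), k < D → (∑ j : Fin (L - D + 1), g j • uhat (k + j.1)) = util k := by
      intro k hk
      funext r
      have h1 := congrFun hg (Sum.inr (⟨k, hk⟩, r))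
      simp only [Matrix.mulVec, dotProduct, hM, Matrix.of_apply, Sum.elim_inr] at h1
      simp only [Finset.sum_apply, Pi.smul_apply, smul_eq_mul]
      rw [← h1]
      apply Finset.sum_congr rfl
      intro jf _
      ring
    have hxeq : ∀ k, k ≤ D → (∑ j : Fin (L - D + 1), g j • xh (k + j.1)) = xt k := by
      intro k
      induction k with
      | zero =>
        intro _
        simp only [Nat.zero_add]
        exact hx0
      | succ k ih =>
        intro hk1
        have hkD : k < D := by omega
        rw [combo_step (by omega) A B xh uhat hxrec g k hkD, ih (by omega), hu k hkD]
        exact ((hxt k hkD).1).symm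
    refine ⟨g, ?_, ?_⟩
    · funext p
      obtain ⟨k, r⟩ := p
      rw [hankel_mulVec_apply]
      exact congrFun (hu k.1 k.isLt) r
    · funext p
      obtain ⟨k, r⟩ := p
      rw [hankel_mulVec_apply]
      have hyk : (∑ j : Fin (L - D + 1), g j • yhat (k.1 + j.1)) = ytil k.1 := by
        have e1 : (∑ j : Fin (L - D + 1), g j • yhat (k.1 + j.1))
            = C *ᵥ (∑ j : Fin (L - D + 1), g j • xh (k.1 + j.1))
              + D₀ *ᵥ (∑ j : Fin (L - D + 1), g j • uhat (k.1 + j.1)) := by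
          rw [mulVec_sum_smul, mulVec_sum_smul, ← Finset.sum_add_distrib]
          apply Finset.sum_congr rfl
          intro jf _
          rw [← smul_add]
          congr 1
          exact hyout (k.1 + jf.1) (by have := jf.isLt; have := k.isLt; omega)
        rw [e1, hxeq k.1 (le_of_lt k.isLt), hu k.1 k.isLt]
        exact ((hxt k.1 k.isLt).2).symm
      exact congrFun hyk r
  · -- reverse direction
    rintro ⟨g, hug, hyg⟩
    have hus : ∀ (k : ℕ), k < D → (∑ j : Fin (L - D + 1), g j • uhat (k + j.1)) = util k := by
      intro k hk
      funext r
      have h1 := congrFun hug (⟨k, hk⟩, r)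
      rw [hankel_mulVec_apply] at h1
      exact h1
    have hys : ∀ (k : ℕ), k < D → (∑ j : Fin (L - D + 1), g j • yhat (k + j.1)) = ytil k := by
      intro k hk
      funext r
      have h1 := congrFun hyg (⟨k, hk⟩, r)
      rw [hankel_mulVec_apply] at h1
      exact h1
    refine ⟨fun k => ∑ j : Fin (L - D + 1), g j • xh (k + j.1), ?_⟩
    intro k hk
    constructor
    · rw [← hus k hk]
      exact combo_step (by omega) A B xh uhat hxrec g k hk
    · rw [← hus k hk, ← hys k hk]
      rw [mulVec_sum_smul, mulVec_sum_smul, ← Finset.sum_add_distrib]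
      apply Finset.sum_congr rfl
      intro jf _
      rw [← smul_add]
      congr 1
      exact hyout (k + jf.1) (by have := jf.isLt; omega)
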